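/- For every n ≥ 3 and every integer k ≥ -2, the polynomial A_n(x) + k·x·A_{n-2}(x) has only real zeros. -/

import Mathlib

open Polynomial

noncomputable section

/-- Number of descents of a permutation of `Fin n` (viewed as the word `σ 0, σ 1, …, σ (n-1)`). -/
def descents {n : ℕ} (σ : Equiv.Perm (Fin n)) : ℕ :=
  (Finset.univ.filter fun i : Fin n =>
    ∃ h : (i : ℕ) + 1 < n, σ ⟨(i : ℕ) + 1, h⟩ < σ i).card

/-- The Eulerian polynomial `A_n(x) = ∑_{σ ∈ S_n} x^{des σ}`. -/
def eulerianPoly (n : ℕ) : Polynomial ℝ :=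
  ∑ σ : Equiv.Perm (Fin n), X ^ descents σ

/-- The refined Eulerian polynomial `A_{n,i}(x)`: the descent generating polynomial over
permutations of `[n]` whose last entry is `n - i` (0-based: `σ (n-1) = n - 1 - i`). -/
def refinedEulerianPoly (n i : ℕ) : Polynomial ℝ :=
  ∑ σ ∈ Finset.univ.filter (fun σ : Equiv.Perm (Fin n) =>
      ∃ h : 0 < n, (σ ⟨n - 1, Nat.sub_lt h Nat.one_pos⟩ : ℕ) = n - 1 - i),
    X ^ descents σ

namespace EulerAux

open Complex

/-- Refined Eulerian polynomial indexed conveniently: permutations of `Fin (n+1)` whose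
last entry is `v`. -/
def B (n : ℕ) (v : Fin (n+1)) : Polynomial ℝ :=
  ∑ σ ∈ Finset.univ.filter (fun σ : Equiv.Perm (Fin (n+1)) => σ (Fin.last n) = v),
    X ^ descents σ

def InCone (z w : ℂ) : Prop := ∃ a b : ℝ, 0 ≤ a ∧ 0 ≤ b ∧ w = (a:ℂ) + (b:ℂ) * z

lemma descents_eq (m : ℕ) (σ : Equiv.Perm (Fin (m+1))) :
    descents σ = (Finset.univ.filter fun j : Fin m => σ j.succ < σ j.castSucc).card := by
  unfold descents
  rw [eq_comm]
  apply Finset.card_bij (fun (j : Fin m) _ => j.castSucc)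
  · intro j hj
    simp only [Finset.mem_filter, Finset.mem_univ, true_and] at hj ⊢
    refine ⟨by simp only [Fin.coe_castSucc]; omega, ?_⟩
    have h1 : (⟨(j.castSucc : ℕ) + 1, by simp only [Fin.coe_castSucc]; omega⟩ : Fin (m+1))
        = j.succ := by
      ext; simp
    rw [h1]
    exact hj
  · intro a _ b _ h
    exact Fin.castSucc_injective _ h
  · intro i hi
    simp only [Finset.mem_filter, Finset.mem_univ, true_and] at hi
    obtain ⟨h, hlt⟩ := hi
    refine ⟨⟨(i : ℕ), by omega⟩, ?_, ?_⟩
    · simp only [Finset.mem_filter, Finset.mem_univ, true_and]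
      have h1 : (⟨(i:ℕ), by omega⟩ : Fin m).succ = ⟨(i:ℕ)+1, h⟩ := by ext; simp
      have h2 : (⟨(i:ℕ), by omega⟩ : Fin m).castSucc = i := by ext; simp
      rw [h1, h2]
      exact hlt
    · ext; simp

/-- Insert a new largest position at the end with value `v`. -/
def extPerm {m : ℕ} (v : Fin (m+2)) (π : Equiv.Perm (Fin (m+1))) : Equiv.Perm (Fin (m+2)) :=
  (finSuccEquiv' (Fin.last (m+1))).trans ((Equiv.optionCongr π).trans (finSuccEquiv' v).symm)

lemma extPerm_last {m : ℕ} (v : Fin (m+2)) (π : Equiv.Perm (Fin (m+1))) :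
    extPerm v π (Fin.last (m+1)) = v := by
  simp [extPerm, finSuccEquiv'_at, finSuccEquiv'_symm_none]

lemma extPerm_castSucc {m : ℕ} (v : Fin (m+2)) (π : Equiv.Perm (Fin (m+1))) (i : Fin (m+1)) :
    extPerm v π i.castSucc = v.succAbove (π i) := by
  have h : i.castSucc = (Fin.last (m+1)).succAbove i := by simp
  rw [h]
  simp only [extPerm, Equiv.trans_apply, finSuccEquiv'_succAbove, Equiv.optionCongr_apply,
    Option.map_some, finSuccEquiv'_symm_some]

lemma descents_extPerm {m : ℕ} (v : Fin (m+2)) (π : Equiv.Perm (Fin (m+1))) :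
    descents (extPerm v π)
      = descents π + (if (v : ℕ) ≤ (π (Fin.last m) : ℕ) then 1 else 0) := by
  rw [descents_eq (m+1) (extPerm v π), descents_eq m π, Finset.card_filter,
    Finset.card_filter, Fin.sum_univ_castSucc]
  congr 1
  · apply Finset.sum_congr rfl
    intro j _
    have h1 : (j.castSucc).succ = (j.succ).castSucc := by
      rw [Fin.succ_castSucc]
    have h2 : ((j.castSucc).castSucc : Fin (m+2)) = (j.castSucc).castSucc := rfl
    rw [h1, extPerm_castSucc, extPerm_castSucc]
    congr 1
    simp only [eq_iff_iff]
    exact Fin.succAbove_lt_succAbove_iff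
  · have h1 : ((Fin.last m).succ : Fin (m+2)) = Fin.last (m+1) := by
      simp [Fin.succ_last]
    rw [h1, extPerm_last, extPerm_castSucc]
    congr 1
    simp only [eq_iff_iff]
    rw [Fin.lt_succAbove_iff_le_castSucc]
    exact ⟨fun h => by simpa [Fin.le_def] using h, fun h => by simpa [Fin.le_def] using h⟩

lemma extPerm_injective {m : ℕ} (v : Fin (m+2)) :
    Function.Injective (extPerm (m := m) v) := by
  intro π π' h
  ext i : 1
  have := congrArg (fun σ : Equiv.Perm (Fin (m+2)) => σ i.castSucc) h
  simp only [extPerm_castSucc] at this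
  exact Fin.succAbove_right_injective (p := v) this

lemma extPerm_surjective {m : ℕ} (v : Fin (m+2)) (σ : Equiv.Perm (Fin (m+2)))
    (hσ : σ (Fin.last (m+1)) = v) : ∃ π, extPerm v π = σ := by
  refine ⟨Equiv.removeNone ((finSuccEquiv' (Fin.last (m+1))).symm.trans
    (σ.trans (finSuccEquiv' v))), ?_⟩
  set M := (finSuccEquiv' (Fin.last (m+1))).symm.trans (σ.trans (finSuccEquiv' v)) with hM
  ext x : 1
  refine Fin.lastCases ?_ ?_ x
  · rw [extPerm_last, hσ]
  · intro i
    rw [extPerm_castSucc]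
    have hne : σ i.castSucc ≠ v := by
      rw [← hσ]
      intro h
      exact absurd (σ.injective h) (Fin.castSucc_lt_last i).ne
    obtain ⟨u, hu⟩ := Fin.exists_succAbove_eq hne
    have hM1 : M (some i) = some u := by
      have h1 : (finSuccEquiv' (Fin.last (m+1))).symm (some i) = i.castSucc := by
        rw [finSuccEquiv'_symm_some]
        simp
      simp only [hM, Equiv.trans_apply, h1, ← hu, finSuccEquiv'_succAbove]
    have := Equiv.removeNone_some M ⟨u, hM1⟩
    rw [hM1] at this
    have h2 : Equiv.removeNone M i = u := by
      exact Option.some_injective _ this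
    rw [h2, hu]

lemma B_zero (v : Fin 1) : B 0 v = 1 := by
  unfold B
  have hv : v = 0 := Subsingleton.elim _ _
  have h1 : (Finset.univ.filter (fun σ : Equiv.Perm (Fin 1) => σ (Fin.last 0) = v))
      = Finset.univ := by
    apply Finset.filter_true_of_mem
    intro σ _
    exact Subsingleton.elim _ _
  rw [h1]
  have h2 : ∀ σ : Equiv.Perm (Fin 1), descents σ = 0 := by
    intro σ
    unfold descents
    apply Finset.card_eq_zero.mpr
    ext i
    simp only [Finset.mem_filter, Finset.mem_univ, true_and, Finset.notMem_empty, iff_false]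
    rintro ⟨h, -⟩
    omega
  calc ∑ σ : Equiv.Perm (Fin 1), (X : Polynomial ℝ) ^ descents σ
      = ∑ _σ : Equiv.Perm (Fin 1), 1 := by
        apply Finset.sum_congr rfl; intro σ _; rw [h2 σ, pow_zero]
    _ = 1 := by simp

lemma eulerian_eq_sum_B (n : ℕ) : eulerianPoly (n+1) = ∑ v : Fin (n+1), B n v := by
  unfold eulerianPoly B
  rw [Finset.sum_fiberwise]

lemma B_rec (m : ℕ) (v : Fin (m+2)) :
    B (m+1) v = ∑ u : Fin (m+1), (if (v:ℕ) ≤ (u:ℕ) then X * B m u else B m u) := by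
  have step1 : B (m+1) v = ∑ π : Equiv.Perm (Fin (m+1)),
      X ^ (descents π + if (v:ℕ) ≤ ((π (Fin.last m)):ℕ) then 1 else 0) := by
    unfold B
    rw [eq_comm]
    apply Finset.sum_bij (fun (π : Equiv.Perm (Fin (m+1))) _ => extPerm v π)
    · intro π _
      simp only [Finset.mem_filter, Finset.mem_univ, true_and]
      exact extPerm_last v π
    · intro a _ b _ h
      exact extPerm_injective v h
    · intro σ hσ
      simp only [Finset.mem_filter, Finset.mem_univ, true_and] at hσ
      obtain ⟨π, hπ⟩ := extPerm_surjective v σ hσ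
      exact ⟨π, Finset.mem_univ π, hπ⟩
    · intro π _
      rw [descents_extPerm]
  rw [step1, ← Finset.sum_fiberwise Finset.univ
    (fun π : Equiv.Perm (Fin (m+1)) => π (Fin.last m))
    (fun π => (X : Polynomial ℝ) ^ (descents π + if (v:ℕ) ≤ ((π (Fin.last m)):ℕ) then 1 else 0))]
  apply Finset.sum_congr rfl
  intro u _
  by_cases h : (v:ℕ) ≤ (u:ℕ)
  · rw [if_pos h]
    unfold B
    rw [Finset.mul_sum]
    apply Finset.sum_congr rfl
    intro π hπ
    simp only [Finset.mem_filter, Finset.mem_univ, true_and] at hπ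
    rw [hπ, if_pos h, pow_add, pow_one, mul_comm]
  · rw [if_neg h]
    unfold B
    apply Finset.sum_congr rfl
    intro π hπ
    simp only [Finset.mem_filter, Finset.mem_univ, true_and] at hπ
    rw [hπ, if_neg h, add_zero]

lemma InCone.zero (z : ℂ) : InCone z 0 := ⟨0, 0, le_refl _, le_refl _, by simp⟩

lemma InCone.add {z w₁ w₂ : ℂ} (h₁ : InCone z w₁) (h₂ : InCone z w₂) : InCone z (w₁ + w₂) := by
  obtain ⟨a₁, b₁, ha₁, hb₁, he₁⟩ := h₁
  obtain ⟨a₂, b₂, ha₂, hb₂, he₂⟩ := h₂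
  exact ⟨a₁+a₂, b₁+b₂, by linarith, by linarith, by rw [he₁, he₂]; push_cast; ring⟩

lemma inCone_sum {z : ℂ} {ι : Type*} (s : Finset ι) (f : ι → ℂ)
    (h : ∀ i ∈ s, InCone z (f i)) : InCone z (∑ i ∈ s, f i) := by
  classical
  induction s using Finset.induction_on with
  | empty => simpa using InCone.zero z
  | insert _ _ hx ih =>
    rw [Finset.sum_insert hx]
    exact (h _ (Finset.mem_insert_self _ _)).add
      (ih fun i hi => h i (Finset.mem_insert_of_mem hi))

lemma inCone_ofReal {z : ℂ} {a : ℝ} (ha : 0 ≤ a) : InCone z (a : ℂ) :=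
  ⟨a, 0, ha, le_refl _, by simp⟩

lemma InCone.im_nonneg {z w : ℂ} (hz : 0 < z.im) (h : InCone z w) : 0 ≤ w.im := by
  obtain ⟨a, b, _, hb, he⟩ := h
  rw [he]
  simp only [Complex.add_im, Complex.ofReal_im, Complex.mul_im, Complex.ofReal_re,
    Complex.ofReal_im, zero_add, zero_mul, add_zero]
  positivity

lemma real_pair_eq_zero {z : ℂ} (hz : 0 < z.im) {a b : ℝ}
    (h : (a:ℂ) + (b:ℂ) * z = 0) : a = 0 ∧ b = 0 := by
  have him := congrArg Complex.im h
  have hre := congrArg Complex.re h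
  simp only [Complex.add_im, Complex.ofReal_im, Complex.mul_im, Complex.ofReal_re,
    Complex.ofReal_im, Complex.add_re, Complex.mul_re, Complex.zero_im, Complex.zero_re,
    zero_add, zero_mul, add_zero, sub_zero] at him hre
  have hb : b = 0 := by
    rcases mul_eq_zero.mp him with h' | h'
    · exact h'
    · exact absurd h' (ne_of_gt hz)
  exact ⟨by rw [hb] at hre; simpa using hre, hb⟩

/-- Positive combinations of a cone family are nonzero. -/
lemma pointed {z : ℂ} (hz : 0 < z.im) {N : ℕ} (w : Fin (N+1) → ℂ)
    (hw : ∀ u, w u ≠ 0)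
    (hC : ∀ u u' : Fin (N+1), u ≤ u' → InCone z (w u * (starRingEnd ℂ) (w u')))
    (c : Fin (N+1) → ℝ) (hc : ∀ u, 0 ≤ c u) (u₀ : Fin (N+1)) (h0 : 0 < c u₀) :
    ∑ u, (c u : ℂ) * w u ≠ 0 := by
  intro hsum
  set L := Fin.last N with hL
  have hCL : ∀ u, InCone z (w u * (starRingEnd ℂ) (w L)) := fun u => hC u L (Fin.le_last u)
  choose a b ha hb he using hCL
  have key : ((∑ u, c u * a u : ℝ) : ℂ) + ((∑ u, c u * b u : ℝ) : ℂ) * z = 0 := by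
    have h1 : (∑ u, (c u : ℂ) * w u) * (starRingEnd ℂ) (w L) = 0 := by rw [hsum]; ring
    rw [Finset.sum_mul] at h1
    have h2 : ∀ u ∈ Finset.univ, (c u : ℂ) * w u * (starRingEnd ℂ) (w L)
        = (c u : ℂ) * ((a u : ℂ) + (b u : ℂ) * z) := by
      intro u _
      rw [mul_assoc, he u]
    rw [Finset.sum_congr rfl h2] at h1
    rw [← h1]
    push_cast
    rw [Finset.sum_mul, ← Finset.sum_add_distrib]
    apply Finset.sum_congr rfl
    intro u _
    ring
  obtain ⟨hA, hB⟩ := real_pair_eq_zero hz key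
  have hA' : ∀ u ∈ Finset.univ, c u * a u = 0 :=
    (Finset.sum_eq_zero_iff_of_nonneg (fun u _ => mul_nonneg (hc u) (ha u))).mp hA
  have hB' : ∀ u ∈ Finset.univ, c u * b u = 0 :=
    (Finset.sum_eq_zero_iff_of_nonneg (fun u _ => mul_nonneg (hc u) (hb u))).mp hB
  have ha0 : a u₀ = 0 := by
    have := hA' u₀ (Finset.mem_univ u₀); rcases mul_eq_zero.mp this with h | h
    · exact absurd h (ne_of_gt h0)
    · exact h
  have hb0 : b u₀ = 0 := by
    have := hB' u₀ (Finset.mem_univ u₀); rcases mul_eq_zero.mp this with h | h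
    · exact absurd h (ne_of_gt h0)
    · exact h
  have := he u₀
  rw [ha0, hb0] at this
  simp only [Complex.ofReal_zero, zero_mul, add_zero, mul_eq_zero] at this
  rcases this with h | h
  · exact hw u₀ h
  · exact hw L (by simpa using congrArg (starRingEnd ℂ) h)

/-- Core algebraic step: the window product stays in the cone. -/
lemma coneStep {z : ℂ} (hz : 0 < z.im) (P M Q : ℂ)
    (h1 : InCone z (P * (starRingEnd ℂ) M))
    (h2 : InCone z (P * (starRingEnd ℂ) Q))
    (h3 : InCone z (M * (starRingEnd ℂ) Q)) :
    InCone z ((P + z * (M + Q)) * (starRingEnd ℂ) ((P + M) + z * Q)) := by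
  obtain ⟨a1, b1, ha1, hb1, he1⟩ := h1
  obtain ⟨a2, b2, ha2, hb2, he2⟩ := h2
  obtain ⟨a3, b3, ha3, hb3, he3⟩ := h3
  set x := z.re with hx
  set N := Complex.normSq z with hNdef
  have hy : 0 < z.im := hz
  -- conjugated versions
  have he1c : M * (starRingEnd ℂ) P = (a1:ℂ) + (b1:ℂ) * (starRingEnd ℂ) z := by
    have := congrArg (starRingEnd ℂ) he1
    simpa [map_mul, mul_comm] using this
  have he2c : Q * (starRingEnd ℂ) P = (a2:ℂ) + (b2:ℂ) * (starRingEnd ℂ) z := by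
    have := congrArg (starRingEnd ℂ) he2
    simpa [map_mul, mul_comm] using this
  have he3c : Q * (starRingEnd ℂ) M = (a3:ℂ) + (b3:ℂ) * (starRingEnd ℂ) z := by
    have := congrArg (starRingEnd ℂ) he3
    simpa [map_mul, mul_comm] using this
  have hPP : P * (starRingEnd ℂ) P = ((Complex.normSq P : ℝ) : ℂ) := Complex.mul_conj P
  have hMM : M * (starRingEnd ℂ) M = ((Complex.normSq M : ℝ) : ℂ) := Complex.mul_conj M
  have hQQ : Q * (starRingEnd ℂ) Q = ((Complex.normSq Q : ℝ) : ℂ) := Complex.mul_conj Q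
  have hzz : z * (starRingEnd ℂ) z = ((N : ℝ) : ℂ) := Complex.mul_conj z
  have hre : z + (starRingEnd ℂ) z = ((2 * x : ℝ) : ℂ) := by
    rw [Complex.add_conj]
  set A : ℝ := Complex.normSq P + N * Complex.normSq Q + a1 + b1 * N + 2 * a2 * x
      + 2 * b2 * N + a3 * N + b3 * N with hA
  set Bc : ℝ := a1 + b1 + Complex.normSq M + a3 + b3 * N with hB
  refine ⟨A, Bc, ?_, ?_, ?_⟩
  · -- 0 ≤ A
    have hN : N = x^2 + z.im^2 := by rw [hNdef, Complex.normSq_apply]; ring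
    have hnsprod : Complex.normSq P * Complex.normSq Q
        = (a2 + b2 * x)^2 + (b2 * z.im)^2 := by
      have := congrArg Complex.normSq he2
      rw [map_mul, Complex.normSq_conj] at this
      rw [this]
      simp [Complex.normSq_apply, Complex.add_re, Complex.add_im, Complex.mul_re,
        Complex.mul_im]
      ring
    have key : N * (Complex.normSq P * Complex.normSq Q) - (a2*x + b2*N)^2
        = (a2 * z.im)^2 := by
      rw [hnsprod, hN]; ring
    have h2' : (Complex.normSq P + N * Complex.normSq Q)^2
        ≥ 4 * ((a2*x + b2*N)^2 + (a2*z.im)^2) := by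
      nlinarith [sq_nonneg (Complex.normSq P - N * Complex.normSq Q), key,
        Complex.normSq_nonneg P, Complex.normSq_nonneg Q, sq_nonneg z.im]
    have hS : 0 ≤ Complex.normSq P + N * Complex.normSq Q := by
      have := Complex.normSq_nonneg P
      have := Complex.normSq_nonneg Q
      have hN0 : 0 ≤ N := Complex.normSq_nonneg z
      positivity
    have hcore : 0 ≤ Complex.normSq P + N * Complex.normSq Q + 2*(a2*x + b2*N) := by
      nlinarith [h2', hS, sq_nonneg (a2*x + b2*N)]
    have hN0 : 0 ≤ N := Complex.normSq_nonneg z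
    nlinarith [hcore, mul_nonneg hb1 hN0, mul_nonneg ha3 hN0, mul_nonneg hb3 hN0,
      mul_nonneg hb2 hN0]
  · -- 0 ≤ Bc
    have hN0 : 0 ≤ N := Complex.normSq_nonneg z
    nlinarith [Complex.normSq_nonneg M, mul_nonneg hb3 hN0]
  · -- the identity
    rw [hA, hB]
    simp only [map_add, map_mul]
    push_cast
    push_cast at hre hzz
    linear_combination hPP + z * hMM + (z * (starRingEnd ℂ) z) * hQQ + he1 + z * he1c
      + ((starRingEnd ℂ) z) * he2 + z * he2c + (z * (starRingEnd ℂ) z) * he3 + z * he3c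
      + (((Complex.normSq Q : ℝ) : ℂ) + (b1:ℂ) + 2*(b2:ℂ) + (a3:ℂ) + (b3:ℂ) + (b3:ℂ)*z) * hzz
      + (a2:ℂ) * hre

lemma window_decomp {z : ℂ} {N : ℕ} (w : Fin (N+1) → ℂ) (v : Fin (N+2)) :
    ∑ u : Fin (N+1), (if (v:ℕ) ≤ (u:ℕ) then z * w u else w u)
      = (∑ u : Fin (N+1), if (u:ℕ) < (v:ℕ) then w u else 0)
        + z * (∑ u : Fin (N+1), if (v:ℕ) ≤ (u:ℕ) then w u else 0) := by
  rw [Finset.mul_sum, ← Finset.sum_add_distrib]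
  apply Finset.sum_congr rfl
  intro u _
  by_cases h : (v:ℕ) ≤ (u:ℕ)
  · rw [if_pos h, if_neg (by omega), if_pos h, zero_add]
  · rw [if_neg h, if_pos (by omega), if_neg h, mul_zero, add_zero]

lemma cone_filter_prod {z : ℂ} {N : ℕ} (w : Fin (N+1) → ℂ)
    (hC : ∀ u u' : Fin (N+1), u ≤ u' → InCone z (w u * (starRingEnd ℂ) (w u')))
    (p q : Fin (N+1) → Prop) [DecidablePred p] [DecidablePred q]
    (hpq : ∀ a b : Fin (N+1), p a → q b → a ≤ b) :
    InCone z ((∑ u, if p u then w u else 0)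
      * (starRingEnd ℂ) (∑ u, if q u then w u else 0)) := by
  rw [map_sum, Finset.sum_mul_sum]
  apply inCone_sum
  intro a _
  apply inCone_sum
  intro b _
  by_cases hpa : p a
  · by_cases hqb : q b
    · rw [if_pos hpa, if_pos hqb]
      exact hC a b (hpq a b hpa hqb)
    · rw [if_neg hqb]
      simpa using InCone.zero z
  · rw [if_neg hpa, zero_mul]
    exact InCone.zero z

lemma invariant_step {z : ℂ} (hz : 0 < z.im) {N : ℕ} (w : Fin (N+1) → ℂ)
    (hw : ∀ u, w u ≠ 0)
    (hC : ∀ u u' : Fin (N+1), u ≤ u' → InCone z (w u * (starRingEnd ℂ) (w u'))) :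
    (∀ v : Fin (N+2), (∑ u : Fin (N+1), if (v:ℕ) ≤ (u:ℕ) then z * w u else w u) ≠ 0)
    ∧ (∀ v v' : Fin (N+2), v ≤ v' →
        InCone z ((∑ u : Fin (N+1), if (v:ℕ) ≤ (u:ℕ) then z * w u else w u)
          * (starRingEnd ℂ) (∑ u : Fin (N+1), if (v':ℕ) ≤ (u:ℕ) then z * w u else w u))) := by
  constructor
  · -- nonvanishing
    intro v h0
    by_cases hvN : (v:ℕ) ≤ N
    · set Qv := ∑ u : Fin (N+1), if (v:ℕ) ≤ (u:ℕ) then w u else 0 with hQv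
      have hQne : Qv ≠ 0 := by
        have : Qv = ∑ u : Fin (N+1), ((if (v:ℕ) ≤ (u:ℕ) then (1:ℝ) else 0 : ℝ) : ℂ) * w u := by
          apply Finset.sum_congr rfl
          intro u _
          by_cases h : (v:ℕ) ≤ (u:ℕ) <;> simp [h]
        rw [this]
        apply pointed hz w hw hC _ (fun u => by split <;> norm_num) (Fin.last N)
        rw [if_pos (by simp [Fin.val_last, hvN])]
        norm_num
      have hcone : InCone z ((∑ u : Fin (N+1), if (u:ℕ) < (v:ℕ) then w u else 0)
          * (starRingEnd ℂ) Qv) := by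
        apply cone_filter_prod w hC
        intro a b hpa hqb
        rw [Fin.le_def]; omega
      obtain ⟨a, b, ha, hb, he⟩ := hcone
      have hmul : (0:ℂ) = (a:ℂ) + ((b + Complex.normSq Qv : ℝ):ℂ) * z := by
        have h1 : (∑ u : Fin (N+1), if (v:ℕ) ≤ (u:ℕ) then z * w u else w u)
            * (starRingEnd ℂ) Qv = 0 := by rw [h0, zero_mul]
        rw [window_decomp, add_mul, mul_assoc, Complex.mul_conj] at h1
        rw [← hQv] at h1
        push_cast
        rw [← h1, he]
        ring
      obtain ⟨ha0, hb0⟩ := real_pair_eq_zero hz hmul.symm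
      have : Complex.normSq Qv = 0 := by
        have := Complex.normSq_nonneg Qv
        linarith
      exact hQne (Complex.normSq_eq_zero.mp this)
    · -- v = N+1 : plain sum of all
      have hval : (v:ℕ) = N+1 := by omega
      have : (∑ u : Fin (N+1), if (v:ℕ) ≤ (u:ℕ) then z * w u else w u)
          = ∑ u : Fin (N+1), ((1:ℝ):ℂ) * w u := by
        apply Finset.sum_congr rfl
        intro u _
        rw [if_neg (by omega)]
        norm_num
      rw [this] at h0
      exact pointed hz w hw hC (fun _ => 1) (fun _ => zero_le_one) 0 one_pos h0
  · -- cone pairs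
    intro v v' hvv'
    have hsplit1 : (∑ u : Fin (N+1), if (u:ℕ) < (v':ℕ) then w u else 0)
        = (∑ u : Fin (N+1), if (u:ℕ) < (v:ℕ) then w u else 0)
          + (∑ u : Fin (N+1), if (v:ℕ) ≤ (u:ℕ) ∧ (u:ℕ) < (v':ℕ) then w u else 0) := by
      rw [← Finset.sum_add_distrib]
      apply Finset.sum_congr rfl
      intro u _
      have hvv : (v:ℕ) ≤ (v':ℕ) := hvv'
      by_cases h1 : (u:ℕ) < (v:ℕ)
      · rw [if_pos (by omega), if_pos h1, if_neg (by omega), add_zero]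
      · by_cases h2 : (u:ℕ) < (v':ℕ)
        · rw [if_pos h2, if_neg h1, if_pos (by omega), zero_add]
        · rw [if_neg h2, if_neg h1, if_neg (by omega), zero_add]
    have hsplit2 : (∑ u : Fin (N+1), if (v:ℕ) ≤ (u:ℕ) then w u else 0)
        = (∑ u : Fin (N+1), if (v:ℕ) ≤ (u:ℕ) ∧ (u:ℕ) < (v':ℕ) then w u else 0)
          + (∑ u : Fin (N+1), if (v':ℕ) ≤ (u:ℕ) then w u else 0) := by
      rw [← Finset.sum_add_distrib]
      apply Finset.sum_congr rfl
      intro u _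
      have hvv : (v:ℕ) ≤ (v':ℕ) := hvv'
      by_cases h1 : (v:ℕ) ≤ (u:ℕ)
      · by_cases h2 : (u:ℕ) < (v':ℕ)
        · rw [if_pos h1, if_pos ⟨h1, h2⟩, if_neg (by omega), add_zero]
        · rw [if_pos h1, if_neg (by simp; omega), if_pos (by omega), zero_add]
      · rw [if_neg h1, if_neg (by simp; omega), if_neg (by omega), add_zero]
    rw [window_decomp w v, window_decomp w v', hsplit2, hsplit1]
    apply coneStep hz
    · apply cone_filter_prod w hC
      intro a b hpa hqb
      rw [Fin.le_def]; omega
    · apply cone_filter_prod w hC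
      intro a b hpa hqb
      have hvv : (v:ℕ) ≤ (v':ℕ) := hvv'
      rw [Fin.le_def]; omega
    · apply cone_filter_prod w hC
      intro a b hpa hqb
      rw [Fin.le_def]; omega

lemma double_nonneg {ι : Type*} [Fintype ι] (f : ι → ι → ℝ)
    (hd : ∀ u u', 0 ≤ f u u' + f u' u) : 0 ≤ ∑ u, ∑ u', f u u' := by
  have h2 : (∑ u, ∑ u', f u u') * 2 = ∑ u, ∑ u', (f u u' + f u' u) := by
    have hcomm : (∑ u, ∑ u', f u u') = ∑ u, ∑ u', f u' u := Finset.sum_comm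
    rw [mul_two]
    nth_rewrite 2 [hcomm]
    rw [← Finset.sum_add_distrib]
    refine Finset.sum_congr rfl fun u _ => ?_
    rw [← Finset.sum_add_distrib]
  have h3 : 0 ≤ ∑ u, ∑ u', (f u u' + f u' u) :=
    Finset.sum_nonneg fun u _ => Finset.sum_nonneg fun u' _ => hd u u'
  linarith

lemma slope_combo {z : ℂ} (hz : 0 < z.im) {N : ℕ} (w : Fin (N+1) → ℂ)
    (hw : ∀ u, w u ≠ 0)
    (hC : ∀ u u' : Fin (N+1), u ≤ u' → InCone z (w u * (starRingEnd ℂ) (w u')))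
    (α β : Fin (N+1) → ℝ) (hα : ∀ u, 0 < α u) (hβ : ∀ u, 0 < β u)
    (hs : ∀ u u' : Fin (N+1), u ≤ u' → α u' * β u ≤ α u * β u') :
    ∑ u, ((α u : ℂ) + (β u : ℂ) * z) * w u ≠ 0 := by
  intro h0
  set A := ∑ u, (α u : ℂ) * w u with hAdef
  set Bc := ∑ u, (β u : ℂ) * w u with hBdef
  have hsplit : A + z * Bc = 0 := by
    rw [hAdef, hBdef, Finset.mul_sum, ← Finset.sum_add_distrib, ← h0]
    apply Finset.sum_congr rfl
    intro u _
    ring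
  have hBne : Bc ≠ 0 := pointed hz w hw hC β (fun u => (hβ u).le) 0 (hβ 0)
  have him : 0 ≤ (A * (starRingEnd ℂ) Bc).im := by
    have hexp : A * (starRingEnd ℂ) Bc
        = ∑ u, ∑ u', ((α u : ℂ) * (β u' : ℂ)) * (w u * (starRingEnd ℂ) (w u')) := by
      rw [hAdef, hBdef, map_sum, Finset.sum_mul_sum]
      apply Finset.sum_congr rfl
      intro u _
      apply Finset.sum_congr rfl
      intro u' _
      rw [map_mul]
      have : (starRingEnd ℂ) ((β u' : ℝ) : ℂ) = ((β u' : ℝ) : ℂ) := Complex.conj_ofReal _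
      rw [this]
      ring
    rw [hexp, Complex.im_sum]
    have : ∀ u, (∑ u', ((α u : ℂ) * (β u' : ℂ)) * (w u * (starRingEnd ℂ) (w u'))).im
        = ∑ u', α u * β u' * (w u * (starRingEnd ℂ) (w u')).im := by
      intro u
      rw [Complex.im_sum]
      apply Finset.sum_congr rfl
      intro u' _
      rw [← Complex.ofReal_mul, Complex.im_ofReal_mul]
    rw [Finset.sum_congr rfl (fun u _ => this u)]
    apply double_nonneg (fun u u' => α u * β u' * (w u * (starRingEnd ℂ) (w u')).im)
    intro u u'
    have hanti : (w u' * (starRingEnd ℂ) (w u)).im = -((w u * (starRingEnd ℂ) (w u')).im) := by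
      have : w u' * (starRingEnd ℂ) (w u) = (starRingEnd ℂ) (w u * (starRingEnd ℂ) (w u')) := by
        rw [map_mul, Complex.conj_conj]
        ring
      rw [this, Complex.conj_im]
    rcases le_total u u' with h | h
    · have h1 : 0 ≤ (w u * (starRingEnd ℂ) (w u')).im := (hC u u' h).im_nonneg hz
      have h2 := hs u u' h
      rw [hanti]
      nlinarith
    · have h1 : 0 ≤ (w u' * (starRingEnd ℂ) (w u)).im := (hC u' u h).im_nonneg hz
      have h2 := hs u' u h
      have h3 : (w u * (starRingEnd ℂ) (w u')).im = -((w u' * (starRingEnd ℂ) (w u)).im) := by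
        rw [hanti]; ring
      rw [h3]
      nlinarith
  have hAeq : A = -(z * Bc) := by linear_combination hsplit
  rw [hAeq] at him
  have : (-(z * Bc) * (starRingEnd ℂ) Bc) = -(z * ((Complex.normSq Bc : ℝ) : ℂ)) := by
    rw [← Complex.mul_conj Bc]
    ring
  rw [this] at him
  have hns : 0 < Complex.normSq Bc := Complex.normSq_pos.mpr hBne
  have : (-(z * ((Complex.normSq Bc : ℝ) : ℂ))).im = -(z.im * Complex.normSq Bc) := by
    simp [Complex.mul_im]
  rw [this] at him
  nlinarith

lemma aeval_B_rec {z : ℂ} (m : ℕ) (v : Fin (m+2)) :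
    aeval z (B (m+1) v)
      = ∑ u : Fin (m+1), (if (v:ℕ) ≤ (u:ℕ) then z * aeval z (B m u) else aeval z (B m u)) := by
  rw [B_rec, map_sum]
  apply Finset.sum_congr rfl
  intro u _
  by_cases h : (v:ℕ) ≤ (u:ℕ)
  · rw [if_pos h, if_pos h, map_mul, aeval_X]
  · rw [if_neg h, if_neg h]

lemma invariant (z : ℂ) (hz : 0 < z.im) : ∀ n : ℕ,
    (∀ u : Fin (n+1), aeval z (B n u) ≠ 0)
    ∧ (∀ u u' : Fin (n+1), u ≤ u' →
        InCone z (aeval z (B n u) * (starRingEnd ℂ) (aeval z (B n u')))) := by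
  intro n
  induction n with
  | zero =>
    constructor
    · intro u
      rw [B_zero u]
      simp
    · intro u u' _
      rw [B_zero u, B_zero u']
      refine ⟨1, 0, zero_le_one, le_refl _, ?_⟩
      simp
  | succ m ih =>
    obtain ⟨hw, hC⟩ := ih
    have h := invariant_step hz (fun u => aeval z (B m u)) hw hC
    constructor
    · intro v
      rw [aeval_B_rec m v]
      exact h.1 v
    · intro v v' hvv'
      rw [aeval_B_rec m v, aeval_B_rec m v']
      exact h.2 v v' hvv'

lemma count_sum (k M : ℕ) (c d : ℂ) :
    ∑ i ∈ Finset.range M, (if i ≤ k then c else d)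
      = ((min (k+1) M : ℕ) : ℂ) * c + (((M - min (k+1) M : ℕ)) : ℂ) * d := by
  induction M with
  | zero => simp
  | succ M ih =>
    rw [Finset.sum_range_succ, ih]
    by_cases h : M ≤ k
    · rw [if_pos h]
      have h1 : min (k+1) (M+1) = M+1 := by omega
      have h2 : min (k+1) M = M := by omega
      rw [h1, h2, Nat.sub_self, Nat.sub_self]
      push_cast
      ring
    · rw [if_neg h]
      have h1 : min (k+1) (M+1) = k+1 := by omega
      have h2 : min (k+1) M = k+1 := by omega
      have h3 : M + 1 - (k+1) = (M - (k+1)) + 1 := by omega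
      rw [h1, h2, h3]
      push_cast [Nat.cast_sub (by omega : k+1 ≤ M)]
      ring

lemma aeval_eulerian (z : ℂ) (m : ℕ) :
    aeval z (eulerianPoly (m+3))
      = ∑ u : Fin (m+2), ((((u:ℕ)+1 : ℕ) : ℂ) * (z * aeval z (B (m+1) u))
          + (((m+2-(u:ℕ) : ℕ)) : ℂ) * aeval z (B (m+1) u)) := by
  have h0 : eulerianPoly (m+3) = ∑ v : Fin (m+3), B (m+2) v := eulerian_eq_sum_B (m+2)
  rw [h0, map_sum]
  have h1 : ∀ v : Fin (m+3), aeval z (B (m+2) v)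
      = ∑ u : Fin (m+2), (if (v:ℕ) ≤ (u:ℕ) then z * aeval z (B (m+1) u)
          else aeval z (B (m+1) u)) := fun v => aeval_B_rec (m+1) v
  rw [Finset.sum_congr rfl (fun v _ => h1 v), Finset.sum_comm]
  apply Finset.sum_congr rfl
  intro u _
  have h2 : ∑ v : Fin (m+3), (if (v:ℕ) ≤ (u:ℕ) then z * aeval z (B (m+1) u)
      else aeval z (B (m+1) u))
      = ∑ i ∈ Finset.range (m+3), (if i ≤ (u:ℕ) then z * aeval z (B (m+1) u)
          else aeval z (B (m+1) u)) := by
    exact Fin.sum_univ_eq_sum_range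
      (fun i => if i ≤ (u:ℕ) then z * aeval z (B (m+1) u) else aeval z (B (m+1) u)) (m+3)
  rw [h2, count_sum]
  have hu : (u:ℕ) < m + 2 := u.isLt
  have h3 : min ((u:ℕ)+1) (m+3) = (u:ℕ)+1 := by omega
  rw [h3]
  have h4 : m+3 - ((u:ℕ)+1) = m+2-(u:ℕ) := by omega
  rw [h4]

lemma B_zero_eq (m : ℕ) : B (m+1) (0 : Fin (m+2)) = X * eulerianPoly (m+1) := by
  rw [B_rec, eulerian_eq_sum_B, Finset.mul_sum]
  apply Finset.sum_congr rfl
  intro u _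
  rw [if_pos]
  simp

lemma B_last_eq (m : ℕ) : B (m+1) (Fin.last (m+1)) = eulerianPoly (m+1) := by
  rw [B_rec, eulerian_eq_sum_B]
  apply Finset.sum_congr rfl
  intro u _
  rw [if_neg]
  simp only [Fin.val_last]
  omega

lemma zero_ne_last (m : ℕ) : ¬((0 : Fin (m+2)) = Fin.last (m+1)) := by
  intro h
  have := congrArg Fin.val h
  simp only [Fin.val_zero, Fin.val_last] at this
  omega

lemma key_nonvanish (m : ℕ) (k : ℤ) (hk : -2 ≤ k) (z : ℂ) (hz : 0 < z.im) :
    aeval z (eulerianPoly (m+3) + C ((k:ℝ)) * X * eulerianPoly (m+1)) ≠ 0 := by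
  obtain ⟨hw, hC⟩ := invariant z hz (m+1)
  set K : ℝ := (k:ℝ)/2 with hK
  have hKm1 : -1 ≤ K := by
    rw [hK]
    have : (-2:ℝ) ≤ (k:ℝ) := by exact_mod_cast hk
    linarith
  have hcast : ∀ u : Fin (m+2), (((m+2-(u:ℕ) : ℕ)) : ℂ) = ((m:ℂ) + 2) - ((u:ℕ):ℂ) := by
    intro u
    have hle : (u:ℕ) ≤ m + 2 := by omega
    push_cast [Nat.cast_sub hle]
    ring
  set α : Fin (m+2) → ℝ :=
    fun u => (m+2:ℝ) - ((u:ℕ):ℝ) + (if u = (0 : Fin (m+2)) then K else 0) with hα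
  set β : Fin (m+2) → ℝ :=
    fun u => ((u:ℕ):ℝ) + 1 + (if u = Fin.last (m+1) then K else 0) with hβ
  have e1 : aeval z (B (m+1) (0 : Fin (m+2))) = z * aeval z (eulerianPoly (m+1)) := by
    rw [B_zero_eq, map_mul, aeval_X]
  have e2 : aeval z (B (m+1) (Fin.last (m+1))) = aeval z (eulerianPoly (m+1)) := by
    rw [B_last_eq]
  have hdelta0 : (∑ u : Fin (m+2), if u = (0 : Fin (m+2))
      then (K:ℂ) * aeval z (B (m+1) u) else 0)
      = (K:ℂ) * aeval z (B (m+1) (0 : Fin (m+2))) := by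
    rw [Finset.sum_ite_eq' Finset.univ (0 : Fin (m+2))
      (fun u => (K:ℂ) * aeval z (B (m+1) u))]
    simp
  have hdeltaL : (∑ u : Fin (m+2), if u = Fin.last (m+1)
      then (K:ℂ) * (z * aeval z (B (m+1) u)) else 0)
      = (K:ℂ) * (z * aeval z (B (m+1) (Fin.last (m+1)))) := by
    rw [Finset.sum_ite_eq' Finset.univ (Fin.last (m+1))
      (fun u => (K:ℂ) * (z * aeval z (B (m+1) u)))]
    simp
  have hsum : ∑ u : Fin (m+2), ((α u : ℂ) + (β u : ℂ) * z) * aeval z (B (m+1) u)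
      = (∑ u : Fin (m+2), ((((u:ℕ)+1 : ℕ) : ℂ) * (z * aeval z (B (m+1) u))
          + (((m+2-(u:ℕ) : ℕ)) : ℂ) * aeval z (B (m+1) u)))
        + ((∑ u : Fin (m+2), if u = (0 : Fin (m+2))
              then (K:ℂ) * aeval z (B (m+1) u) else 0)
          + (∑ u : Fin (m+2), if u = Fin.last (m+1)
              then (K:ℂ) * (z * aeval z (B (m+1) u)) else 0)) := by
    rw [← Finset.sum_add_distrib, ← Finset.sum_add_distrib]
    apply Finset.sum_congr rfl
    intro u _
    rw [hcast u]
    simp only [hα, hβ]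
    split_ifs with h1 h2 h2
    · exact absurd (h1 ▸ h2) (zero_ne_last m)
    · push_cast
      ring
    · push_cast
      ring
    · push_cast
      ring
  have heval : aeval z (eulerianPoly (m+3) + C ((k:ℝ)) * X * eulerianPoly (m+1))
      = ∑ u : Fin (m+2), ((α u : ℂ) + (β u : ℂ) * z) * aeval z (B (m+1) u) := by
    rw [map_add, map_mul, map_mul, aeval_C, aeval_X, hsum, hdelta0, hdeltaL, e1, e2,
      aeval_eulerian z m, Complex.coe_algebraMap, hK]
    push_cast
    ring
  rw [heval]
  apply slope_combo hz _ hw hC α β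
  · -- 0 < α u
    intro u
    simp only [hα]
    have hle : ((u:ℕ):ℝ) ≤ m + 1 := by
      have : (u:ℕ) ≤ m+1 := by omega
      exact_mod_cast this
    split_ifs with h1
    · have h0 : ((u:ℕ):ℝ) = 0 := by rw [h1]; simp
      rw [h0]
      linarith
    · linarith
  · -- 0 < β u
    intro u
    simp only [hβ]
    have hge : (0:ℝ) ≤ ((u:ℕ):ℝ) := by positivity
    split_ifs with h1
    · have h0 : ((u:ℕ):ℝ) = m+1 := by rw [h1]; simp
      rw [h0]
      linarith
    · linarith
  · -- slope condition
    intro u u' huu'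
    rcases eq_or_lt_of_le huu' with heq | hlt
    · rw [heq]
    · have hvlt : (u:ℕ) < (u':ℕ) := hlt
      have hu'ne0 : ¬(u' = (0 : Fin (m+2))) := by
        intro h
        rw [h] at hvlt
        simp at hvlt
      have hunelast : ¬(u = Fin.last (m+1)) := by
        intro h
        rw [h] at hvlt
        simp only [Fin.val_last] at hvlt
        omega
      simp only [hα, hβ]
      rw [if_neg hu'ne0, if_neg hunelast]
      have hb2 : ((u':ℕ):ℝ) ≤ m+1 := by
        have : (u':ℕ) ≤ m+1 := by omega
        exact_mod_cast this
      have hab : ((u:ℕ):ℝ) + 1 ≤ ((u':ℕ):ℝ) := by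
        have : (u:ℕ) + 1 ≤ (u':ℕ) := hvlt
        exact_mod_cast this
      have ha0 : (0:ℝ) ≤ ((u:ℕ):ℝ) := by positivity
      by_cases h0 : u = (0 : Fin (m+2))
      · rw [if_pos h0]
        have hv0 : ((u:ℕ):ℝ) = 0 := by rw [h0]; simp
        by_cases hl : u' = Fin.last (m+1)
        · rw [if_pos hl]
          have hvl : ((u':ℕ):ℝ) = m+1 := by rw [hl]; simp
          rw [hv0, hvl]
          nlinarith [hKm1]
        · rw [if_neg hl]
          have hbm : ((u':ℕ):ℝ) ≤ m := by
            have h1 : (u':ℕ) ≠ m+1 := by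
              intro h
              exact hl (Fin.ext (by simp [h, Fin.val_last]))
            have : (u':ℕ) ≤ m := by omega
            exact_mod_cast this
          rw [hv0]
          nlinarith [hKm1, hab, hbm, hb2]
      · rw [if_neg h0]
        have ha1 : (1:ℝ) ≤ ((u:ℕ):ℝ) := by
          have h1 : (u:ℕ) ≠ 0 := by
            intro h
            exact h0 (Fin.ext (by simp [h]))
          have : 1 ≤ (u:ℕ) := by omega
          exact_mod_cast this
        by_cases hl : u' = Fin.last (m+1)
        · rw [if_pos hl]
          have hvl : ((u':ℕ):ℝ) = m+1 := by rw [hl]; simp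
          have ham : ((u:ℕ):ℝ) ≤ m := by
            have : (u:ℕ) ≤ m := by omega
            exact_mod_cast this
          rw [hvl]
          nlinarith [hKm1, ha1, ham]
        · rw [if_neg hl]
          nlinarith [hab, hb2]


end EulerAux

theorem eulerian_add_real_rooted_int (n : ℕ) (hn : 3 ≤ n) (k : ℤ) (hk : -2 ≤ k) :
    ∀ z : ℂ, aeval z (eulerianPoly n + C (k : ℝ) * X * eulerianPoly (n - 2)) = 0 →
      z.im = 0 := by
  obtain ⟨m, rfl⟩ : ∃ m, n = m + 3 := ⟨n - 3, by omega⟩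
  intro z hz0
  have hsub : m + 3 - 2 = m + 1 := by omega
  rw [hsub] at hz0
  by_contra him
  rcases lt_or_gt_of_ne him with hlt | hgt
  · have h2 : aeval ((starRingEnd ℂ) z)
        (eulerianPoly (m+3) + C ((k:ℝ)) * X * eulerianPoly (m+1)) = 0 := by
      rw [Polynomial.aeval_conj, hz0, map_zero]
    have hpos : 0 < ((starRingEnd ℂ) z).im := by
      rw [Complex.conj_im]
      linarith
    exact EulerAux.key_nonvanish m k hk _ hpos h2
  · exact EulerAux.key_nonvanish m k hk z hgt hz0

end
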